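/- Let A be a commutative Noetherian ring, Λ a free abelian group of finite rank, and Λ⁻ ⊆ Λ a finitely generated submonoid generating Λ as a group. Let M be a module over the group algebra A[Λ] which is finitely generated as an A-module, N an A-module, M₀ ⊆ M an additive subgroup, and e₀ : M₀ → N an additive map. Assume: for every m ∈ M and h ∈ A there exists λ₀ ∈ Λ such that for all λ ∈ λ₀ + Λ⁻ one has λ·m ∈ M₀, λ·(h m) ∈ M₀, and e₀(λ·(h m)) = h · e₀(λ·m). Then there exists a unique A-linear map e : M → N with the property: for every m ∈ M there exists λ₀ ∈ Λ such that for all λ ∈ λ₀ + Λ⁻ one has λ·m ∈ M₀ and e(λ·m) = e₀(λ·m). -/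

import Mathlib

open Polynomial

section aux
variable {Λ : Type*} [AddCommGroup Λ] (Λneg : AddSubmonoid Λ)

lemma bk_diff (hgen : AddSubgroup.closure (Λneg : Set Λ) = ⊤) (lam : Λ) :
    ∃ a ∈ Λneg, ∃ b ∈ Λneg, lam = a - b := by
  have hmem : lam ∈ AddSubgroup.closure (Λneg : Set Λ) := by rw [hgen]; trivial
  induction hmem using AddSubgroup.closure_induction with
  | mem x hx => exact ⟨x, hx, 0, Λneg.zero_mem, by simp⟩
  | zero => exact ⟨0, Λneg.zero_mem, 0, Λneg.zero_mem, by simp⟩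
  | add x y hx hy ihx ihy =>
      obtain ⟨a, ha, b, hb, rfl⟩ := ihx
      obtain ⟨c, hc, d, hd, rfl⟩ := ihy
      exact ⟨a + c, Λneg.add_mem ha hc, b + d, Λneg.add_mem hb hd, by abel⟩
  | neg x hx ihx =>
      obtain ⟨a, ha, b, hb, rfl⟩ := ihx
      exact ⟨b, hb, a, ha, by abel⟩

lemma bk_cofinal (hfg : Λneg.FG) (hgen : AddSubgroup.closure (Λneg : Set Λ) = ⊤) :
    ∃ s ∈ Λneg, ∀ lam : Λ, ∃ n₀ : ℕ, ∀ n, n₀ ≤ n → n • s - lam ∈ Λneg := by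
  classical
  obtain ⟨S, hS⟩ := hfg
  set s : Λ := ∑ x ∈ S, x with hs
  have hSsub : (S : Set Λ) ⊆ Λneg := by
    rw [← hS]; exact AddSubmonoid.subset_closure
  have hsmem : s ∈ Λneg := AddSubmonoid.sum_mem _ fun x hx => hSsub hx
  refine ⟨s, hsmem, ?_⟩
  -- first, for elements of Λneg
  have key : ∀ a ∈ Λneg, ∃ n₀ : ℕ, ∀ n, n₀ ≤ n → n • s - a ∈ Λneg := by
    intro a ha
    have ha' : a ∈ AddSubmonoid.closure (S : Set Λ) := hS ▸ ha
    clear ha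
    induction ha' using AddSubmonoid.closure_induction with
    | mem x hx =>
        refine ⟨1, fun n hn => ?_⟩
        have h1 : s - x ∈ Λneg := by
          have : x + ∑ y ∈ S.erase x, y = s := Finset.add_sum_erase S id hx
          have h2 : s - x = ∑ y ∈ S.erase x, y := by rw [← this]; abel
          rw [h2]
          exact AddSubmonoid.sum_mem _ fun y hy => hSsub (Finset.mem_of_mem_erase hy)
        have : n • s - x = (n - 1) • s + (s - x) := by
          have : (n - 1) • s + s = n • s := by
            rw [← succ_nsmul]
            congr 1
            omega
          rw [← this]; abel
        rw [this]
        exact Λneg.add_mem (AddSubmonoid.nsmul_mem _ hsmem _) h1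
    | zero =>
        exact ⟨0, fun n _ => by simpa using AddSubmonoid.nsmul_mem _ hsmem n⟩
    | add x y hx hy ihx ihy =>
        obtain ⟨n₁, h1⟩ := ihx
        obtain ⟨n₂, h2⟩ := ihy
        refine ⟨n₁ + n₂, fun n hn => ?_⟩
        have hsplit : n • s - (x + y) = (n₁ • s - x) + ((n - n₁) • s - y) := by
          have : n₁ • s + (n - n₁) • s = n • s := by
            rw [← add_nsmul]; congr 1; omega
          rw [← this]; abel
        rw [hsplit]
        exact Λneg.add_mem (h1 n₁ le_rfl) (h2 (n - n₁) (by omega))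
  intro lam
  obtain ⟨a, ha, b, hb, rfl⟩ := bk_diff Λneg hgen lam
  obtain ⟨n₀, h⟩ := key a ha
  refine ⟨n₀, fun n hn => ?_⟩
  have : n • s - (a - b) = (n • s - a) + b := by abel
  rw [this]
  exact Λneg.add_mem (h n hn) hb

lemma bk_directed (hgen : AddSubgroup.closure (Λneg : Set Λ) = ⊤) (l1 l2 : Λ) :
    ∃ l3 : Λ, l3 - l1 ∈ Λneg ∧ l3 - l2 ∈ Λneg := by
  obtain ⟨a, ha, b, hb, hab⟩ := bk_diff Λneg hgen (l2 - l1)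
  refine ⟨l1 + a, by simpa using ha, ?_⟩
  rw [show l1 + a - l2 = a - (l2 - l1) by abel, hab, show a - (a - b) = b by abel]
  exact hb

lemma bk_findirected (hgen : AddSubgroup.closure (Λneg : Set Λ) = ⊤)
    (f : ℕ → Λ) (t : Finset ℕ) : ∃ l0 : Λ, ∀ i ∈ t, l0 - f i ∈ Λneg := by
  classical
  induction t using Finset.induction with
  | empty => exact ⟨0, by simp⟩
  | insert a u hx _ =>
      obtain ⟨l0, hl0⟩ := ‹∃ l0 : Λ, ∀ i ∈ u, l0 - f i ∈ Λneg›
      obtain ⟨l1, h1, h2⟩ := bk_directed Λneg hgen l0 (f a)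
      refine ⟨l1, fun i hi => ?_⟩
      rcases Finset.mem_insert.mp hi with rfl | hi
      · exact h2
      · have : l1 - f i = (l1 - l0) + (l0 - f i) := by abel
        rw [this]; exact Λneg.add_mem h1 (hl0 i hi)

end aux

section aux2
variable {A : Type*} [CommRing A]

lemma bk_aeval_apply {V : Type*} [AddCommGroup V] [Module A V]
    (x : Module.End A V) (p : A[X]) (v : V) :
    (Polynomial.aeval x p) v = p.sum fun n a => a • (x ^ n) v := by
  rw [Polynomial.aeval_def, Polynomial.eval₂_eq_sum]
  rw [Polynomial.sum_def, Polynomial.sum_def]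
  rw [LinearMap.coe_sum, Finset.sum_apply]
  refine Finset.sum_congr rfl fun n _ => ?_
  rw [Module.End.mul_apply]
  erw [Module.algebraMap_end_apply]

variable {Λ : Type*} [AddCommGroup Λ] {N : Type*} [AddCommGroup N] [Module A N]

/-- shift by `s` on functions `Λ → N` -/
def bkShift (A : Type*) [CommRing A] {Λ : Type*} [AddCommGroup Λ]
    (N : Type*) [AddCommGroup N] [Module A N] (s : Λ) : Module.End A (Λ → N) where
  toFun u := fun lam => u (lam + s)
  map_add' _ _ := rfl
  map_smul' _ _ := rfl

lemma bkShift_pow (s : Λ) (n : ℕ) (u : Λ → N) (lam : Λ) :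
    ((bkShift A N s) ^ n) u lam = u (lam + n • s) := by
  induction n generalizing u lam with
  | zero => simp
  | succ k ih =>
      rw [pow_succ]
      show ((bkShift A N s) ^ k) (bkShift A N s u) lam = _
      rw [ih]
      show u (lam + k • s + s) = u (lam + (k + 1) • s)
      rw [succ_nsmul]
      rw [show lam + k • s + s = lam + (k • s + s) by abel]

lemma bk_psi (s : Λ) (p : A[X]) (u : Λ → N) (lam : Λ) :
    (Polynomial.aeval (bkShift A N s) p) u lam = p.sum fun n a => a • u (lam + n • s) := by
  rw [bk_aeval_apply]
  rw [Polynomial.sum_def, Polynomial.sum_def, Finset.sum_apply]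
  refine Finset.sum_congr rfl fun n _ => ?_
  rw [Pi.smul_apply, bkShift_pow]

lemma bk_sampling (s : Λ) (p : A[X]) (u v : Λ → N) (lam : Λ)
    (h : ∀ n ∈ p.support, u (lam + n • s) = v (lam + n • s)) :
    (Polynomial.aeval (bkShift A N s) p) u lam = (Polynomial.aeval (bkShift A N s) p) v lam := by
  rw [bk_psi, bk_psi, Polynomial.sum_def, Polynomial.sum_def]
  exact Finset.sum_congr rfl fun n hn => by rw [h n hn]

lemma bk_support_ge (p : A[X]) (k : ℕ) (h : X ^ k ∣ p) {n : ℕ} (hn : n ∈ p.support) : k ≤ n := by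
  obtain ⟨q, rfl⟩ := h
  by_contra hlt
  exact Polynomial.mem_support_iff.mp hn
    (by rw [Polynomial.coeff_X_pow_mul', if_neg hlt])

lemma bk_exists_g {M : Type*} [AddCommGroup M] [Module A M] [Module.Finite A M]
    (T Tinv : Module.End A M) (hT : T * Tinv = 1) (hT' : Tinv * T = 1) :
    ∃ g : A[X], X ∣ g ∧ Polynomial.aeval T g = 1 := by
  obtain ⟨p, hmonic, hp⟩ := LinearMap.exists_monic_and_aeval_eq_zero A Tinv
  set k := p.natDegree with hk
  have hcomm : Commute T Tinv := by
    unfold Commute SemiconjBy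
    rw [hT, hT']
  have h1 : ∀ j : ℕ, T ^ j * Tinv ^ j = 1 := by
    intro j
    rw [← hcomm.mul_pow, hT, one_pow]
  have hTpow : ∀ j, j ≤ k → T ^ k * Tinv ^ j = T ^ (k - j) := by
    intro j hj
    calc T ^ k * Tinv ^ j = T ^ (k - j) * (T ^ j * Tinv ^ j) := by
          rw [← mul_assoc, ← pow_add]
          congr 2
          omega
      _ = T ^ (k - j) := by rw [h1, mul_one]
  -- expanded identity
  have hexp : Polynomial.aeval Tinv p =
      ∑ i ∈ Finset.range (k + 1), p.coeff i • Tinv ^ i :=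
    Polynomial.aeval_eq_sum_range Tinv
  have hzero : (0 : Module.End A M) =
      ∑ i ∈ Finset.range (k + 1), p.coeff i • T ^ (k - i) := by
    have := congrArg (fun f => T ^ k * f) (hp.symm.trans hexp)
    rw [Finset.mul_sum] at this
    calc (0 : Module.End A M) = T ^ k * 0 := by rw [mul_zero]
      _ = _ := by
          rw [this]
          refine Finset.sum_congr rfl fun i hi => ?_
          rw [mul_smul_comm, hTpow i (by
            have := Finset.mem_range.mp hi; omega)]
  have hone : (1 : Module.End A M) =
      -∑ i ∈ Finset.range k, p.coeff i • T ^ (k - i) := by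
    rw [Finset.sum_range_succ] at hzero
    have hck : p.coeff k = 1 := hmonic.coeff_natDegree
    rw [hck, Nat.sub_self, pow_zero, one_smul] at hzero
    linear_combination (norm := abel) -hzero
  refine ⟨-∑ i ∈ Finset.range k, Polynomial.C (p.coeff i) * X ^ (k - i), ?_, ?_⟩
  · refine Dvd.dvd.neg_right (Finset.dvd_sum fun i hi => ?_)
    exact Dvd.dvd.mul_left
      (dvd_pow_self X (by have := Finset.mem_range.mp hi; omega)) _
  · rw [map_neg, map_sum]
    rw [hone]
    congr 1
    refine Finset.sum_congr rfl fun i _ => ?_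
    rw [map_mul, Polynomial.aeval_C, Polynomial.aeval_X_pow, ← Algebra.smul_def]

end aux2

section auxbk

variable {A : Type*} [CommRing A]
variable {Λ : Type*} [AddCommGroup Λ]
variable {M : Type*} [AddCommGroup M] [Module A M]
variable {N : Type*} [AddCommGroup N] [Module A N]

open Classical in
/-- extension by zero of `e₀` -/
noncomputable def bkEt (M₀ : AddSubgroup M) (e₀ : M₀ →+ N) : M → N :=
  fun x => if h : x ∈ M₀ then e₀ ⟨x, h⟩ else 0

lemma bkEt_of_mem (M₀ : AddSubgroup M) (e₀ : M₀ →+ N) {x : M} (hx : x ∈ M₀) :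
    bkEt M₀ e₀ x = e₀ ⟨x, hx⟩ := by unfold bkEt; rw [dif_pos hx]

lemma bkEt_zero (M₀ : AddSubgroup M) (e₀ : M₀ →+ N) : bkEt M₀ e₀ 0 = 0 := by
  rw [bkEt_of_mem M₀ e₀ M₀.zero_mem]
  exact map_zero e₀

lemma bkEt_add (M₀ : AddSubgroup M) (e₀ : M₀ →+ N) {x y : M} (hx : x ∈ M₀) (hy : y ∈ M₀) :
    bkEt M₀ e₀ (x + y) = bkEt M₀ e₀ x + bkEt M₀ e₀ y := by
  rw [bkEt_of_mem M₀ e₀ (M₀.add_mem hx hy), bkEt_of_mem M₀ e₀ hx, bkEt_of_mem M₀ e₀ hy]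
  exact map_add e₀ ⟨x, hx⟩ ⟨y, hy⟩

lemma bkEt_sum (M₀ : AddSubgroup M) (e₀ : M₀ →+ N) (t : Finset ℕ) (x : ℕ → M)
    (hx : ∀ i ∈ t, x i ∈ M₀) :
    bkEt M₀ e₀ (∑ i ∈ t, x i) = ∑ i ∈ t, bkEt M₀ e₀ (x i) := by
  classical
  induction t using Finset.induction with
  | empty => simpa using bkEt_zero M₀ e₀
  | @insert a u hni ih =>
      rw [Finset.sum_insert hni, Finset.sum_insert hni,
        bkEt_add M₀ e₀ (hx a (Finset.mem_insert_self a u))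
          (AddSubgroup.sum_mem M₀ fun i hi => hx i (Finset.mem_insert_of_mem hi)),
        ih fun i hi => hx i (Finset.mem_insert_of_mem hi)]

variable (σ : Multiplicative Λ →* (M →ₗ[A] M))

lemma bk_comp (a b : Λ) (m : M) :
    σ (Multiplicative.ofAdd a) (σ (Multiplicative.ofAdd b) m)
      = σ (Multiplicative.ofAdd (a + b)) m := by
  rw [ofAdd_add, map_mul, Module.End.mul_apply]

/-- the goodness predicate: at all points deep beyond `l0`, membership and
`A`-semilinearity of `e₀` w.r.t. the coefficients of `g` hold for `m`. -/
def bkGood (M₀ : AddSubgroup M) (e₀ : M₀ →+ N) (Λneg : AddSubmonoid Λ)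
    (g : A[X]) (m : M) (l0 : Λ) : Prop :=
  ∀ lam : Λ, lam - l0 ∈ Λneg →
    σ (Multiplicative.ofAdd lam) m ∈ M₀ ∧
    ∀ n ∈ g.support, σ (Multiplicative.ofAdd lam) (g.coeff n • m) ∈ M₀ ∧
      bkEt M₀ e₀ (σ (Multiplicative.ofAdd lam) (g.coeff n • m))
        = g.coeff n • bkEt M₀ e₀ (σ (Multiplicative.ofAdd lam) m)

variable (M₀ : AddSubgroup M) (e₀ : M₀ →+ N) (Λneg : AddSubmonoid Λ)

lemma bk_good_shift (g : A[X]) (m : M) (l0 : Λ)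
    (hgood : bkGood σ M₀ e₀ Λneg g m l0) (lam : Λ) :
    bkGood σ M₀ e₀ Λneg g (σ (Multiplicative.ofAdd lam) m) (l0 - lam) := by
  intro μ hμ
  have hd : (μ + lam) - l0 ∈ Λneg := by
    rw [show μ + lam - l0 = μ - (l0 - lam) by abel]; exact hμ
  obtain ⟨ha, hb⟩ := hgood (μ + lam) hd
  constructor
  · rw [bk_comp]; exact ha
  · intro n hn
    obtain ⟨hb1, hb2⟩ := hb n hn
    rw [bk_comp σ μ lam m,
      show σ (Multiplicative.ofAdd μ) (g.coeff n • σ (Multiplicative.ofAdd lam) m)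
          = σ (Multiplicative.ofAdd (μ + lam)) (g.coeff n • m) by
        rw [← map_smul (σ (Multiplicative.ofAdd lam)), bk_comp]]
    exact ⟨hb1, hb2⟩

end auxbk
section corebk

open Polynomial

variable {A : Type*} [CommRing A]
variable {Λ : Type*} [AddCommGroup Λ]
variable {M : Type*} [AddCommGroup M] [Module A M]
variable {N : Type*} [AddCommGroup N] [Module A N]
variable (σ : Multiplicative Λ →* (M →ₗ[A] M))
variable (M₀ : AddSubgroup M) (e₀ : M₀ →+ N) (Λneg : AddSubmonoid Λ)
variable {s : Λ} {g : A[X]}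

lemma bk_R (hs : s ∈ Λneg)
    (hg : Polynomial.aeval (σ (Multiplicative.ofAdd s) : Module.End A M) g = 1) (m : M) (l0 : Λ) (hgood : bkGood σ M₀ e₀ Λneg g m l0)
    (lam : Λ) (hlam : lam - l0 ∈ Λneg) :
    (Polynomial.aeval (bkShift A N s) g)
        (fun μ => bkEt M₀ e₀ (σ (Multiplicative.ofAdd μ) m)) lam
      = bkEt M₀ e₀ (σ (Multiplicative.ofAdd lam) m) := by
  rw [bk_psi]
  have hexp : σ (Multiplicative.ofAdd lam) m
      = ∑ n ∈ g.support, σ (Multiplicative.ofAdd (lam + n • s)) (g.coeff n • m) := by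
    calc σ (Multiplicative.ofAdd lam) m
        = σ (Multiplicative.ofAdd lam)
            ((Polynomial.aeval (σ (Multiplicative.ofAdd s) : Module.End A M) g) m) := by
          rw [hg]; rfl
      _ = σ (Multiplicative.ofAdd lam)
            (∑ n ∈ g.support, g.coeff n • (((σ (Multiplicative.ofAdd s) : Module.End A M)) ^ n) m) := by
          rw [bk_aeval_apply, Polynomial.sum_def]
      _ = ∑ n ∈ g.support, σ (Multiplicative.ofAdd (lam + n • s)) (g.coeff n • m) := by
          rw [map_sum]
          refine Finset.sum_congr rfl fun n hn => ?_
          rw [map_smul, map_smul]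
          congr 1
          rw [← map_pow,
            show (Multiplicative.ofAdd s) ^ n = Multiplicative.ofAdd (n • s) from
              (ofAdd_nsmul n s).symm]
          rw [show σ (Multiplicative.ofAdd lam) ((σ (Multiplicative.ofAdd (n • s))) m)
              = σ (Multiplicative.ofAdd (lam + n • s)) m by
            rw [ofAdd_add, map_mul, Module.End.mul_apply]]
  have hmem : ∀ n ∈ g.support,
      σ (Multiplicative.ofAdd (lam + n • s)) (g.coeff n • m) ∈ M₀ := by
    intro n hn
    have hdeep : (lam + n • s) - l0 ∈ Λneg := by
      rw [show lam + n • s - l0 = (lam - l0) + n • s by abel]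
      exact Λneg.add_mem hlam (AddSubmonoid.nsmul_mem _ hs n)
    exact ((hgood (lam + n • s) hdeep).2 n hn).1
  rw [hexp, bkEt_sum M₀ e₀ g.support _ hmem, Polynomial.sum_def]
  refine Finset.sum_congr rfl fun n hn => ?_
  have hdeep : (lam + n • s) - l0 ∈ Λneg := by
    rw [show lam + n • s - l0 = (lam - l0) + n • s by abel]
    exact Λneg.add_mem hlam (AddSubmonoid.nsmul_mem _ hs n)
  exact ((hgood (lam + n • s) hdeep).2 n hn).2.symm

lemma bk_K2 (hs : s ∈ Λneg)
    (hg : Polynomial.aeval (σ (Multiplicative.ofAdd s) : Module.End A M) g = 1) (m : M) (l0 : Λ) (hgood : bkGood σ M₀ e₀ Λneg g m l0)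
    (Nn : ℕ) (lam : Λ) (hlam : lam - l0 ∈ Λneg) :
    (Polynomial.aeval (bkShift A N s) (g ^ Nn))
        (fun μ => bkEt M₀ e₀ (σ (Multiplicative.ofAdd μ) m)) lam
      = bkEt M₀ e₀ (σ (Multiplicative.ofAdd lam) m) := by
  induction Nn generalizing lam with
  | zero => rw [pow_zero, map_one, Module.End.one_apply]
  | succ k ih =>
      rw [pow_succ, map_mul, Module.End.mul_apply]
      refine (bk_sampling s (g ^ k) _ _ lam fun n hn => ?_).trans (ih lam hlam)
      exact bk_R σ M₀ e₀ Λneg hs hg m l0 hgood (lam + n • s)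
        (by rw [show lam + n • s - l0 = (lam - l0) + n • s by abel]
            exact Λneg.add_mem hlam (AddSubmonoid.nsmul_mem _ hs n))

lemma bk_K3 (hs : s ∈ Λneg)
    (hg : Polynomial.aeval (σ (Multiplicative.ofAdd s) : Module.End A M) g = 1)
    (hXg : Polynomial.X ∣ g) (m : M) (l0 : Λ) (hgood : bkGood σ M₀ e₀ Λneg g m l0)
    (N1 N2 : ℕ) (hN1 : N1 • s - l0 ∈ Λneg) (hle : N1 ≤ N2) :
    (Polynomial.aeval (bkShift A N s) (g ^ N2))
        (fun μ => bkEt M₀ e₀ (σ (Multiplicative.ofAdd μ) m)) 0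
      = (Polynomial.aeval (bkShift A N s) (g ^ N1))
          (fun μ => bkEt M₀ e₀ (σ (Multiplicative.ofAdd μ) m)) 0 := by
  rw [show N2 = N1 + (N2 - N1) by omega, pow_add, map_mul, Module.End.mul_apply]
  refine bk_sampling s (g ^ N1) _ _ 0 fun n hn => ?_
  have hn1 : N1 ≤ n := bk_support_ge _ N1 (pow_dvd_pow_of_dvd hXg N1) hn
  have hdeep : (0 + n • s) - l0 ∈ Λneg := by
    have hsum : (n - N1) • s + N1 • s = n • s := by
      rw [← add_nsmul]; congr 1; omega
    rw [show (0 : Λ) + n • s - l0 = (n - N1) • s + (N1 • s - l0) by rw [← hsum]; abel]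
    exact Λneg.add_mem (AddSubmonoid.nsmul_mem _ hs _) hN1
  exact bk_K2 σ M₀ e₀ Λneg hs hg m l0 hgood (N2 - N1) (0 + n • s) hdeep

end corebk

/-- Multidimensional Bezrukavnikov–Kazhdan lemma: extension of a map defined
asymptotically (along translates of a finitely generated submonoid `Λ⁻` of a lattice `Λ`
acting on a module `M` over `A[Λ]` that is finite over the Noetherian ring `A`)
to a unique `A`-linear map `e : M → N`. -/
theorem stmt1 {A : Type*} [CommRing A] [IsNoetherianRing A]
    {Λ : Type*} [AddCommGroup Λ] [Module.Free ℤ Λ] [Module.Finite ℤ Λ]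
    (Λneg : AddSubmonoid Λ) (hfg : Λneg.FG)
    (hgen : AddSubgroup.closure (Λneg : Set Λ) = ⊤)
    {M N : Type*} [AddCommGroup M] [Module A M] [Module.Finite A M]
    [AddCommGroup N] [Module A N]
    (σ : Multiplicative Λ →* (M →ₗ[A] M))
    (M₀ : AddSubgroup M) (e₀ : M₀ →+ N)
    (H : ∀ (m : M) (h : A), ∃ lam₀ : Λ, ∀ lam ∈ Λneg,
      ∃ (h₁ : σ (Multiplicative.ofAdd (lam₀ + lam)) m ∈ M₀)
        (h₂ : σ (Multiplicative.ofAdd (lam₀ + lam)) (h • m) ∈ M₀),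
        e₀ ⟨_, h₂⟩ = h • e₀ ⟨_, h₁⟩) :
    ∃! e : M →ₗ[A] N, ∀ m : M, ∃ lam₀ : Λ, ∀ lam ∈ Λneg,
      ∃ h₁ : σ (Multiplicative.ofAdd (lam₀ + lam)) m ∈ M₀,
        e (σ (Multiplicative.ofAdd (lam₀ + lam)) m) = e₀ ⟨_, h₁⟩ := by
  classical
  obtain ⟨s, hs, hcof⟩ := bk_cofinal Λneg hfg hgen
  have hT : (σ (Multiplicative.ofAdd s) : Module.End A M)
      * σ (Multiplicative.ofAdd (-s)) = 1 := by
    rw [← map_mul, ← ofAdd_add, add_neg_cancel, ofAdd_zero, map_one]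
  have hT' : (σ (Multiplicative.ofAdd (-s)) : Module.End A M)
      * σ (Multiplicative.ofAdd s) = 1 := by
    rw [← map_mul, ← ofAdd_add, neg_add_cancel, ofAdd_zero, map_one]
  obtain ⟨g, hXg, hg⟩ := bk_exists_g (σ (Multiplicative.ofAdd s))
    (σ (Multiplicative.ofAdd (-s))) hT hT'
  have hdtrans : ∀ a b c : Λ, a - b ∈ Λneg → b - c ∈ Λneg → a - c ∈ Λneg := by
    intro a b c h1 h2
    rw [show a - c = (a - b) + (b - c) by abel]
    exact Λneg.add_mem h1 h2
  -- existence of good bases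
  have hGoodEx : ∀ m : M, ∃ l0 : Λ, bkGood σ M₀ e₀ Λneg g m l0 := by
    intro m
    choose F hF using fun n : ℕ => H m (g.coeff n)
    obtain ⟨l1, hl1⟩ := bk_findirected Λneg hgen F g.support
    obtain ⟨lstar, hstar⟩ := H m 1
    obtain ⟨l0, hd1, hd2⟩ := bk_directed Λneg hgen l1 lstar
    refine ⟨l0, fun lam hlam => ⟨?_, ?_⟩⟩
    · have hls : lam - lstar ∈ Λneg := hdtrans lam l0 lstar hlam hd2
      obtain ⟨h₁, -, -⟩ := hstar (lam - lstar) hls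
      rwa [show lstar + (lam - lstar) = lam by abel] at h₁
    · intro n hn
      have hfn : lam - F n ∈ Λneg :=
        hdtrans lam l0 (F n) hlam (hdtrans l0 l1 (F n) hd1 (hl1 n hn))
      obtain ⟨h₁, h₂, heq⟩ := hF n (lam - F n) hfn
      have hkey : F n + (lam - F n) = lam := by abel
      rw [← hkey]
      refine ⟨h₂, ?_⟩
      rw [bkEt_of_mem M₀ e₀ h₂, bkEt_of_mem M₀ e₀ h₁]
      exact heq
  choose lamg hGood using hGoodEx
  choose Nf hNf using fun m => hcof (lamg m)
  -- the candidate function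
  set efun : M → N := fun m =>
    (Polynomial.aeval (bkShift A N s) (g ^ Nf m))
      (fun μ => bkEt M₀ e₀ (σ (Multiplicative.ofAdd μ) m)) 0 with hefun
  have hstab : ∀ (m : M) (l0 : Λ), bkGood σ M₀ e₀ Λneg g m l0 →
      ∀ Nn : ℕ, Nn • s - l0 ∈ Λneg →
      efun m = (Polynomial.aeval (bkShift A N s) (g ^ Nn))
        (fun μ => bkEt M₀ e₀ (σ (Multiplicative.ofAdd μ) m)) 0 := by
    intro m l0 hgood Nn hNn
    have h1 := bk_K3 σ M₀ e₀ Λneg hs hg hXg m (lamg m) (hGood m) (Nf m) (max Nn (Nf m))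
      (hNf m (Nf m) le_rfl) (le_max_right _ _)
    have h2 := bk_K3 σ M₀ e₀ Λneg hs hg hXg m l0 hgood Nn (max Nn (Nf m)) hNn (le_max_left _ _)
    exact h1.symm.trans h2
  -- values at deep translates
  have hval : ∀ (m : M) (lam : Λ), lam - lamg m ∈ Λneg →
      efun (σ (Multiplicative.ofAdd lam) m)
        = bkEt M₀ e₀ (σ (Multiplicative.ofAdd lam) m) := by
    intro m lam hlam
    have hgood' := bk_good_shift σ M₀ e₀ Λneg g m (lamg m) (hGood m) lam
    obtain ⟨n₀, hn₀⟩ := hcof (lamg m - lam)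
    have h1 := hstab (σ (Multiplicative.ofAdd lam) m) (lamg m - lam) hgood' n₀ (hn₀ n₀ le_rfl)
    have h2 := bk_K2 σ M₀ e₀ Λneg hs hg (σ (Multiplicative.ofAdd lam) m) (lamg m - lam) hgood'
      n₀ 0 (by rw [show (0:Λ) - (lamg m - lam) = lam - lamg m by abel]; exact hlam)
    rw [h1, h2]
    rw [show (Multiplicative.ofAdd (0:Λ)) = 1 from ofAdd_zero, map_one, Module.End.one_apply]
  -- additivity
  have hadd : ∀ m₁ m₂ : M, efun (m₁ + m₂) = efun m₁ + efun m₂ := by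
    intro m₁ m₂
    set Nn := max (max (Nf m₁) (Nf m₂)) (Nf (m₁ + m₂)) with hNndef
    have d1 : Nn • s - lamg m₁ ∈ Λneg := hNf m₁ Nn (by omega)
    have d2 : Nn • s - lamg m₂ ∈ Λneg := hNf m₂ Nn (by omega)
    have d3 : Nn • s - lamg (m₁ + m₂) ∈ Λneg := hNf (m₁ + m₂) Nn (by omega)
    rw [hstab m₁ _ (hGood m₁) Nn d1, hstab m₂ _ (hGood m₂) Nn d2,
      hstab (m₁ + m₂) _ (hGood (m₁ + m₂)) Nn d3]
    have hsamp : (Polynomial.aeval (bkShift A N s) (g ^ Nn))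
        (fun μ => bkEt M₀ e₀ (σ (Multiplicative.ofAdd μ) (m₁ + m₂))) 0
        = (Polynomial.aeval (bkShift A N s) (g ^ Nn))
            ((fun μ => bkEt M₀ e₀ (σ (Multiplicative.ofAdd μ) m₁))
              + fun μ => bkEt M₀ e₀ (σ (Multiplicative.ofAdd μ) m₂)) 0 := by
      refine bk_sampling s (g ^ Nn) _ _ 0 fun n hn => ?_
      have hnn : Nn ≤ n := bk_support_ge _ Nn (pow_dvd_pow_of_dvd hXg Nn) hn
      have e1 : (0 + n • s) - lamg m₁ ∈ Λneg := by
        rw [zero_add]; exact hNf m₁ n (by omega)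
      have e2 : (0 + n • s) - lamg m₂ ∈ Λneg := by
        rw [zero_add]; exact hNf m₂ n (by omega)
      show bkEt M₀ e₀ (σ (Multiplicative.ofAdd (0 + n • s)) (m₁ + m₂))
        = bkEt M₀ e₀ (σ (Multiplicative.ofAdd (0 + n • s)) m₁)
          + bkEt M₀ e₀ (σ (Multiplicative.ofAdd (0 + n • s)) m₂)
      rw [map_add]
      exact bkEt_add M₀ e₀ ((hGood m₁) _ e1).1 ((hGood m₂) _ e2).1
    rw [hsamp, map_add]
    rfl
  -- A-homogeneity
  have hsmul : ∀ (h : A) (m : M), efun (h • m) = h • efun m := by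
    intro h m
    obtain ⟨lh, hlh⟩ := H m h
    obtain ⟨n₀h, hn₀h⟩ := hcof lh
    set Nn := max (max (Nf m) (Nf (h • m))) n₀h with hNndef
    have d1 : Nn • s - lamg (h • m) ∈ Λneg := hNf (h • m) Nn (by omega)
    have d2 : Nn • s - lamg m ∈ Λneg := hNf m Nn (by omega)
    rw [hstab (h • m) _ (hGood (h • m)) Nn d1, hstab m _ (hGood m) Nn d2]
    have hsamp : (Polynomial.aeval (bkShift A N s) (g ^ Nn))
        (fun μ => bkEt M₀ e₀ (σ (Multiplicative.ofAdd μ) (h • m))) 0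
        = (Polynomial.aeval (bkShift A N s) (g ^ Nn))
            (h • fun μ => bkEt M₀ e₀ (σ (Multiplicative.ofAdd μ) m)) 0 := by
      refine bk_sampling s (g ^ Nn) _ _ 0 fun n hn => ?_
      have hnn : Nn ≤ n := bk_support_ge _ Nn (pow_dvd_pow_of_dvd hXg Nn) hn
      have hd : (0 + n • s) - lh ∈ Λneg := by
        rw [zero_add]
        exact hn₀h n (by omega)
      obtain ⟨h₁, h₂, heq⟩ := hlh ((0 + n • s) - lh) hd
      have hkey : lh + ((0 + n • s) - lh) = 0 + n • s := by abel
      show bkEt M₀ e₀ (σ (Multiplicative.ofAdd (0 + n • s)) (h • m))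
        = (h • fun μ => bkEt M₀ e₀ (σ (Multiplicative.ofAdd μ) m)) (0 + n • s)
      rw [← hkey]
      show bkEt M₀ e₀ (σ (Multiplicative.ofAdd (lh + ((0 + n • s) - lh))) (h • m))
        = h • bkEt M₀ e₀ (σ (Multiplicative.ofAdd (lh + ((0 + n • s) - lh))) m)
      rw [bkEt_of_mem M₀ e₀ h₂, bkEt_of_mem M₀ e₀ h₁]
      exact heq
    rw [hsamp, map_smul]
    rfl
  set e : M →ₗ[A] N :=
    { toFun := efun
      map_add' := hadd
      map_smul' := fun h m => hsmul h m } with hedef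
  refine ⟨e, ?_, ?_⟩
  · intro m
    refine ⟨lamg m, fun lam hlam => ?_⟩
    have hdeep : (lamg m + lam) - lamg m ∈ Λneg := by
      rw [show lamg m + lam - lamg m = lam by abel]; exact hlam
    refine ⟨(hGood m _ hdeep).1, ?_⟩
    have hv := hval m (lamg m + lam) hdeep
    rw [show e (σ (Multiplicative.ofAdd (lamg m + lam)) m)
        = efun (σ (Multiplicative.ofAdd (lamg m + lam)) m) from rfl, hv]
    exact bkEt_of_mem M₀ e₀ (hGood m _ hdeep).1
  · intro e' he'
    apply LinearMap.ext
    intro m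
    obtain ⟨l1, h1⟩ := he' m
    obtain ⟨l3, d31, d32⟩ := bk_directed Λneg hgen l1 (lamg m)
    obtain ⟨n₀, hn₀⟩ := hcof l3
    have hmexp : m = (g ^ n₀).sum fun n a =>
        a • (((σ (Multiplicative.ofAdd s) : Module.End A M)) ^ n) m := by
      conv_lhs => rw [show m = (Polynomial.aeval
          (σ (Multiplicative.ofAdd s) : Module.End A M) (g ^ n₀)) m by
        rw [map_pow, hg, one_pow]; rfl]
      exact bk_aeval_apply _ _ m
    have hpush : ∀ f : M →ₗ[A] N, f m
        = ∑ n ∈ (g ^ n₀).support, (g ^ n₀).coeff n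
            • f (σ (Multiplicative.ofAdd (n • s)) m) := by
      intro f
      conv_lhs => rw [hmexp]
      rw [Polynomial.sum_def, map_sum]
      refine Finset.sum_congr rfl fun n hn => ?_
      rw [map_smul]
      rw [show (((σ (Multiplicative.ofAdd s) : Module.End A M)) ^ n) m
          = σ (Multiplicative.ofAdd (n • s)) m from by
        rw [← map_pow, show (Multiplicative.ofAdd s) ^ n = Multiplicative.ofAdd (n • s) from
          (ofAdd_nsmul n s).symm]]
    rw [hpush e', hpush e]
    refine Finset.sum_congr rfl fun n hn => ?_
    have hnn : n₀ ≤ n := bk_support_ge _ n₀ (pow_dvd_pow_of_dvd hXg n₀) hn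
    have hd3 : n • s - l3 ∈ Λneg := hn₀ n hnn
    have hd1' : n • s - l1 ∈ Λneg := hdtrans _ _ _ hd3 d31
    have hd2' : n • s - lamg m ∈ Λneg := hdtrans _ _ _ hd3 d32
    congr 1
    obtain ⟨hh₁, hval'⟩ := h1 (n • s - l1) hd1'
    have hee : e (σ (Multiplicative.ofAdd (n • s)) m)
        = bkEt M₀ e₀ (σ (Multiplicative.ofAdd (n • s)) m) := hval m (n • s) hd2'
    have hkey : l1 + (n • s - l1) = n • s := by abel
    have he'' : e' (σ (Multiplicative.ofAdd (n • s)) m)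
        = bkEt M₀ e₀ (σ (Multiplicative.ofAdd (n • s)) m) := by
      rw [← hkey, hval', bkEt_of_mem M₀ e₀ hh₁]
    exact he''.trans hee.symm
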